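/- Let B ∈ ℝ^{m×m} be symmetric PSD with compact SVD B = UΣUᵀ, σ₁(Σ) = 1, rank(B) = r_B. Let X ∈ St(m,r) with r ≥ r_B, Θ = XᵀBX, and G = −(I_m − XXᵀ)BXXᵀBX. With Φ = UᵀX, it holds that GᵀG = Θ Φᵀ Σ (I_{r_B} − ΦΦᵀ) Σ Φ Θ and σ₁(GᵀG) ≤ σ₁(I_{r_B} − ΦΦᵀ). -/

import Mathlib

open Matrix

/-- Spectral norm of a real matrix: square root of the largest eigenvalue of `Mᵀ M`. -/
noncomputable def specNorm {a b : ℕ} (M : Matrix (Fin a) (Fin b) ℝ) : ℝ :=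
  Real.sqrt (sSup {e : ℝ | Module.End.HasEigenvalue (Matrix.toLin' (Mᵀ * M)) e})

lemma dot_self_nonneg' {n : ℕ} (v : Fin n → ℝ) : 0 ≤ v ⬝ᵥ v :=
  Finset.sum_nonneg fun i _ => mul_self_nonneg _

lemma eigSet_finite {n : ℕ} (M : Matrix (Fin n) (Fin n) ℝ) :
    {e : ℝ | Module.End.HasEigenvalue (Matrix.toLin' M) e}.Finite :=
  Module.End.finite_hasEigenvalue _

lemma dot_MtM {a b : ℕ} (M : Matrix (Fin a) (Fin b) ℝ) (u : Fin b → ℝ) :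
    (M *ᵥ u) ⬝ᵥ (M *ᵥ u) = u ⬝ᵥ ((Mᵀ * M) *ᵥ u) := by
  have h : (M *ᵥ u) ᵥ* M = (Mᵀ * M) *ᵥ u := by
    rw [← Matrix.mulVec_transpose, Matrix.mulVec_mulVec]
  rw [Matrix.dotProduct_mulVec, h, dotProduct_comm]

lemma rayleigh {n : ℕ} {A : Matrix (Fin n) (Fin n) ℝ} (hA : A.IsHermitian) (v : Fin n → ℝ) :
    v ⬝ᵥ (A *ᵥ v) ≤ sSup {e : ℝ | Module.End.HasEigenvalue (Matrix.toLin' A) e} * (v ⬝ᵥ v) := by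
  set c := sSup {e : ℝ | Module.End.HasEigenvalue (Matrix.toLin' A) e} with hc
  have hmem : ∀ i : Fin n, hA.eigenvalues i ∈
      {e : ℝ | Module.End.HasEigenvalue (Matrix.toLin' A) e} := by
    intro i
    refine Module.End.hasEigenvalue_of_hasEigenvector
      (x := ⇑(hA.eigenvectorBasis i)) ⟨Module.End.mem_eigenspace_iff.2 ?_, ?_⟩
    · show Matrix.toLin' A (⇑(hA.eigenvectorBasis i)) = _
      rw [Matrix.toLin'_apply]
      exact hA.mulVec_eigenvectorBasis i
    · exact fun h => hA.eigenvectorBasis.orthonormal.ne_zero i ((WithLp.ofLp_eq_zero 2).mp h)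
  have hle : ∀ i, hA.eigenvalues i ≤ c := fun i => le_csSup (eigSet_finite A).bddAbove (hmem i)
  have hsp := hA.spectral_theorem
  set V : Matrix (Fin n) (Fin n) ℝ := (hA.eigenvectorUnitary : Matrix (Fin n) (Fin n) ℝ) with hV
  have hstar : star V = Vᵀ := by
    rw [Matrix.star_eq_conjTranspose, Matrix.conjTranspose_eq_transpose_of_trivial]
  have hVV : V * Vᵀ = 1 := by
    rw [← hstar]; exact (Matrix.mem_unitaryGroup_iff).mp hA.eigenvectorUnitary.2
  set y := Vᵀ *ᵥ v with hy
  have key : ∀ (D : Matrix (Fin n) (Fin n) ℝ), v ⬝ᵥ ((V * D * Vᵀ) *ᵥ v) = y ⬝ᵥ (D *ᵥ y) := by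
    intro D
    rw [Matrix.mul_assoc, ← Matrix.mulVec_mulVec, Matrix.dotProduct_mulVec,
      ← Matrix.mulVec_transpose, Matrix.mulVec_mulVec, ← Matrix.mulVec_mulVec, hy]
  have hvv : v ⬝ᵥ v = y ⬝ᵥ y := by
    have := key 1
    rwa [Matrix.mul_one, hVV, Matrix.one_mulVec, Matrix.one_mulVec] at this
  have hD : diagonal (RCLike.ofReal ∘ hA.eigenvalues) = diagonal hA.eigenvalues := by
    congr 1
  calc v ⬝ᵥ (A *ᵥ v) = y ⬝ᵥ (diagonal hA.eigenvalues *ᵥ y) := by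
        conv_lhs => rw [hsp]
        rw [Unitary.conjStarAlgAut_apply, ← hV, hstar, hD]; exact key _
    _ = ∑ i, hA.eigenvalues i * (y i * y i) := by
        simp only [dotProduct, Matrix.mulVec_diagonal]
        exact Finset.sum_congr rfl fun i _ => by ring
    _ ≤ ∑ i, c * (y i * y i) := by
        refine Finset.sum_le_sum fun i _ => ?_
        exact mul_le_mul_of_nonneg_right (hle i) (mul_self_nonneg _)
    _ = c * (v ⬝ᵥ v) := by rw [hvv]; simp [dotProduct, Finset.mul_sum]

lemma mulVec_dot_le {a b : ℕ} (M : Matrix (Fin a) (Fin b) ℝ) (v : Fin b → ℝ) :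
    (M *ᵥ v) ⬝ᵥ (M *ᵥ v) ≤ specNorm M ^ 2 * (v ⬝ᵥ v) := by
  rw [dot_MtM]
  have hH : (Mᵀ * M).IsHermitian := by
    rw [← Matrix.conjTranspose_eq_transpose_of_trivial]
    exact Matrix.isHermitian_conjTranspose_mul_self M
  refine le_trans (rayleigh hH v) ?_
  refine mul_le_mul_of_nonneg_right ?_ (dot_self_nonneg' v)
  unfold specNorm
  rcases le_or_gt 0 (sSup {e : ℝ | Module.End.HasEigenvalue (Matrix.toLin' (Mᵀ * M)) e}) with h | h
  · rw [Real.sq_sqrt h]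
  · nlinarith [Real.sqrt_nonneg (sSup {e : ℝ | Module.End.HasEigenvalue (Matrix.toLin' (Mᵀ * M)) e})]

-- orthonormal columns: exact norm preservation
lemma dot_iso {a b : ℕ} {M : Matrix (Fin a) (Fin b) ℝ} (hM : Mᵀ * M = 1) (u : Fin b → ℝ) :
    (M *ᵥ u) ⬝ᵥ (M *ᵥ u) = u ⬝ᵥ u := by
  rw [dot_MtM, hM, Matrix.one_mulVec]

-- transpose of orthonormal-column matrix contracts
lemma dot_proj_le {a b : ℕ} {M : Matrix (Fin a) (Fin b) ℝ} (hM : Mᵀ * M = 1) (w : Fin a → ℝ) :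
    (Mᵀ *ᵥ w) ⬝ᵥ (Mᵀ *ᵥ w) ≤ w ⬝ᵥ w := by
  rw [dot_MtM, Matrix.transpose_transpose]
  set N : Matrix (Fin a) (Fin a) ℝ := 1 - M * Mᵀ with hN
  have hNs : Nᵀ = N := by
    rw [hN, Matrix.transpose_sub, Matrix.transpose_one, Matrix.transpose_mul,
      Matrix.transpose_transpose]
  have h2 : M * Mᵀ * (M * Mᵀ) = M * Mᵀ := by
    rw [Matrix.mul_assoc, ← Matrix.mul_assoc Mᵀ M Mᵀ, hM, Matrix.one_mul]
  have hNN : Nᵀ * N = N := by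
    rw [hNs, hN, Matrix.mul_sub, Matrix.sub_mul, Matrix.one_mul, Matrix.sub_mul, Matrix.one_mul, h2]
    simp
  have h0 : 0 ≤ w ⬝ᵥ (N *ᵥ w) := by
    rw [← hNN, ← dot_MtM]
    exact dot_self_nonneg' _
  have hsub : N *ᵥ w = w - (M * Mᵀ) *ᵥ w := by
    rw [hN, Matrix.sub_mulVec, Matrix.one_mulVec]
  rw [hsub, dotProduct_sub] at h0
  linarith

lemma diag_entries_le_one {n : ℕ} {S : Matrix (Fin n) (Fin n) ℝ} (hSd : S.IsDiag)
    (hS1 : specNorm S = 1) (i : Fin n) : S i i ^ 2 ≤ 1 := by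
  have hent : ∀ j k, (Sᵀ * S) j k = if j = k then S j j ^ 2 else 0 := by
    intro j k
    rw [Matrix.mul_apply]
    by_cases h : j = k
    · subst h
      rw [if_pos rfl]
      rw [Finset.sum_eq_single j]
      · simp [sq]
      · intro l _ hl
        rw [Matrix.transpose_apply, hSd hl, zero_mul]
      · simp
    · rw [if_neg h]
      apply Finset.sum_eq_zero
      intro l _
      rcases eq_or_ne l j with rfl | hl
      · rw [hSd h, mul_zero]
      · rw [Matrix.transpose_apply, hSd hl, zero_mul]
  have heig : Module.End.HasEigenvalue (Matrix.toLin' (Sᵀ * S)) (S i i ^ 2) := by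
    apply Module.End.hasEigenvalue_of_hasEigenvector (x := Pi.single i (1:ℝ))
    constructor
    · rw [Module.End.mem_eigenspace_iff, Matrix.toLin'_apply]
      ext j
      rw [Matrix.mulVec_single]
      simp only [mul_one, hent, Pi.smul_apply]
      rcases eq_or_ne j i with rfl | hj
      · simp [hent]
      · simp [hent, if_neg hj, Pi.single_eq_of_ne hj]
    · intro h
      have := congr_fun h i
      simp at this
  have hbdd := (eigSet_finite (Sᵀ * S)).bddAbove
  have hle : S i i ^ 2 ≤ sSup {e : ℝ | Module.End.HasEigenvalue (Matrix.toLin' (Sᵀ * S)) e} :=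
    le_csSup hbdd heig
  have h1 : sSup {e : ℝ | Module.End.HasEigenvalue (Matrix.toLin' (Sᵀ * S)) e} = 1 :=
    Real.sqrt_eq_one.mp hS1
  linarith

lemma diag_mulVec_dot_le {n : ℕ} {S : Matrix (Fin n) (Fin n) ℝ} (hSd : S.IsDiag)
    (hS1 : specNorm S = 1) (w : Fin n → ℝ) : (S *ᵥ w) ⬝ᵥ (S *ᵥ w) ≤ w ⬝ᵥ w := by
  have hmv : S *ᵥ w = fun i => S i i * w i := by
    ext j
    rw [Matrix.mulVec, dotProduct, Finset.sum_eq_single j]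
    · intro l _ hl
      rw [hSd (Ne.symm hl), zero_mul]
    · simp
  rw [hmv, dotProduct, dotProduct]
  refine Finset.sum_le_sum fun i _ => ?_
  have h := diag_entries_le_one hSd hS1 i
  nlinarith [mul_self_nonneg (w i), mul_self_nonneg (S i i * w i)]

/-- Symmetric case: `B = U Σ Uᵀ` symmetric PSD with compact SVD, `σ₁(Σ) = 1`,
`rank B = r_B ≤ r`, `X ∈ St(m,r)`, `Θ = Xᵀ B X`, `G = −(I − XXᵀ) B X Xᵀ B X`,
`Φ = Uᵀ X`. Then `GᵀG = Θ Φᵀ Σ (I − ΦΦᵀ) Σ Φ Θ` and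
`σ₁(GᵀG) ≤ σ₁(I − ΦΦᵀ)`. -/
theorem symmetric_grad_identity_and_bound {m r rB : ℕ} (hr : rB ≤ r)
    (U : Matrix (Fin m) (Fin rB) ℝ) (hU : Uᵀ * U = 1)
    (S : Matrix (Fin rB) (Fin rB) ℝ) (hSd : S.IsDiag) (hSpos : ∀ i, 0 < S i i)
    (hS1 : specNorm S = 1)
    (B : Matrix (Fin m) (Fin m) ℝ) (hB : B = U * S * Uᵀ) (hrank : B.rank = rB)
    (X : Matrix (Fin m) (Fin r) ℝ) (hX : Xᵀ * X = 1)
    (Θ : Matrix (Fin r) (Fin r) ℝ) (hΘ : Θ = Xᵀ * B * X)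
    (G : Matrix (Fin m) (Fin r) ℝ) (hG : G = -((1 - X * Xᵀ) * B * X * Xᵀ * B * X)) :
    Gᵀ * G = Θ * (Uᵀ * X)ᵀ * S * (1 - (Uᵀ * X) * (Uᵀ * X)ᵀ) * S * (Uᵀ * X) * Θ ∧
      specNorm (Gᵀ * G) ≤ specNorm (1 - (Uᵀ * X) * (Uᵀ * X)ᵀ) := by

  subst hB
  have hSt : Sᵀ = S := by
    ext i j
    rcases eq_or_ne i j with rfl | h
    · rfl
    · rw [Matrix.transpose_apply, hSd (Ne.symm h), hSd h]
  have hX' : ∀ {k : ℕ} (M : Matrix (Fin r) (Fin k) ℝ), Xᵀ * (X * M) = M := fun M => by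
    rw [← Matrix.mul_assoc, hX, Matrix.one_mul]
  have hU' : ∀ {k : ℕ} (M : Matrix (Fin rB) (Fin k) ℝ), Uᵀ * (U * M) = M := fun M => by
    rw [← Matrix.mul_assoc, hU, Matrix.one_mul]
  -- Part 1: the identity
  have hid : Gᵀ * G = Θ * (Uᵀ * X)ᵀ * S * (1 - (Uᵀ * X) * (Uᵀ * X)ᵀ) * S * (Uᵀ * X) * Θ := by
    subst hG hΘ
    simp only [Matrix.transpose_neg, Matrix.transpose_mul, Matrix.transpose_sub,
      Matrix.transpose_one, Matrix.transpose_transpose, hSt, Matrix.neg_mul, Matrix.mul_neg,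
      neg_neg, Matrix.mul_sub, Matrix.sub_mul, Matrix.mul_one, Matrix.one_mul,
      Matrix.mul_assoc, hX', hU']
    abel
  refine ⟨hid, ?_⟩
  -- Part 2: the spectral-norm bound
  set P : Matrix (Fin rB) (Fin rB) ℝ := 1 - (Uᵀ * X) * (Uᵀ * X)ᵀ with hP
  set c : ℝ := specNorm P with hcdef
  have hc0 : 0 ≤ c := Real.sqrt_nonneg _
  -- contraction bounds
  have qΘ : ∀ u : Fin r → ℝ, (Θ *ᵥ u) ⬝ᵥ (Θ *ᵥ u) ≤ u ⬝ᵥ u := by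
    intro u
    have hmv : Θ *ᵥ u = Xᵀ *ᵥ (U *ᵥ (S *ᵥ (Uᵀ *ᵥ (X *ᵥ u)))) := by
      rw [hΘ]; simp only [Matrix.mulVec_mulVec, Matrix.mul_assoc]
    rw [hmv]
    refine le_trans (dot_proj_le hX _) ?_
    rw [dot_iso hU]
    refine le_trans (diag_mulVec_dot_le hSd hS1 _) ?_
    refine le_trans (dot_proj_le hU _) (le_of_eq (dot_iso hX u))
  have qΦ : ∀ u : Fin r → ℝ, ((Uᵀ * X) *ᵥ u) ⬝ᵥ ((Uᵀ * X) *ᵥ u) ≤ u ⬝ᵥ u := by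
    intro u
    rw [← Matrix.mulVec_mulVec]
    exact le_trans (dot_proj_le hU _) (le_of_eq (dot_iso hX u))
  have qΦT : ∀ w : Fin rB → ℝ, ((Uᵀ * X)ᵀ *ᵥ w) ⬝ᵥ ((Uᵀ * X)ᵀ *ᵥ w) ≤ w ⬝ᵥ w := by
    intro w
    rw [Matrix.transpose_mul, Matrix.transpose_transpose, ← Matrix.mulVec_mulVec]
    exact le_trans (dot_proj_le hX _) (le_of_eq (dot_iso hU w))
  have qS : ∀ w : Fin rB → ℝ, (S *ᵥ w) ⬝ᵥ (S *ᵥ w) ≤ w ⬝ᵥ w := diag_mulVec_dot_le hSd hS1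
  have qP : ∀ w : Fin rB → ℝ, (P *ᵥ w) ⬝ᵥ (P *ᵥ w) ≤ c ^ 2 * (w ⬝ᵥ w) := fun w =>
    mulVec_dot_le P w
  -- the key eigenvalue bound
  have hkey : ∀ μ ∈ {e : ℝ | Module.End.HasEigenvalue
      (Matrix.toLin' ((Gᵀ * G)ᵀ * (Gᵀ * G))) e}, μ ≤ c ^ 2 := by
    intro μ hμ
    obtain ⟨v, hv⟩ := Module.End.HasEigenvalue.exists_hasEigenvector hμ
    have hv1 : ((Gᵀ * G)ᵀ * (Gᵀ * G)) *ᵥ v = μ • v := by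
      have := Module.End.mem_eigenspace_iff.mp hv.1
      rwa [Matrix.toLin'_apply] at this
    have hq : 0 < v ⬝ᵥ v :=
      lt_of_le_of_ne (dot_self_nonneg' v) fun h => hv.2 (dotProduct_self_eq_zero.mp h.symm)
    have hμq : μ * (v ⬝ᵥ v) = ((Gᵀ * G) *ᵥ v) ⬝ᵥ ((Gᵀ * G) *ᵥ v) := by
      rw [dot_MtM, hv1, dotProduct_smul, smul_eq_mul]
    have hsplit : (Gᵀ * G) *ᵥ v =
        Θ *ᵥ ((Uᵀ * X)ᵀ *ᵥ (S *ᵥ (P *ᵥ (S *ᵥ ((Uᵀ * X) *ᵥ (Θ *ᵥ v)))))) := by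
      rw [hid]; simp only [Matrix.mulVec_mulVec, Matrix.mul_assoc]
    have hbound : ((Gᵀ * G) *ᵥ v) ⬝ᵥ ((Gᵀ * G) *ᵥ v) ≤ c ^ 2 * (v ⬝ᵥ v) := by
      rw [hsplit]
      refine le_trans (qΘ _) ?_
      refine le_trans (qΦT _) ?_
      refine le_trans (qS _) ?_
      refine le_trans (qP _) ?_
      refine mul_le_mul_of_nonneg_left ?_ (sq_nonneg c)
      exact le_trans (qS _) (le_trans (qΦ _) (qΘ _))
    have : μ * (v ⬝ᵥ v) ≤ c ^ 2 * (v ⬝ᵥ v) := hμq ▸ hbound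
    exact le_of_mul_le_mul_right this hq
  have hsup : sSup {e : ℝ | Module.End.HasEigenvalue
      (Matrix.toLin' ((Gᵀ * G)ᵀ * (Gᵀ * G))) e} ≤ c ^ 2 :=
    Real.sSup_le hkey (sq_nonneg c)
  calc specNorm (Gᵀ * G) ≤ Real.sqrt (c ^ 2) := Real.sqrt_le_sqrt hsup
    _ = c := Real.sqrt_sq hc0
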